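/- Let p ≥ 1 and let g be the map sending an invertible p×p real matrix S to its normalized inverse g(S) = d(S⁻¹) · S⁻¹ · d(S⁻¹), where d(P) is the diagonal matrix with entries (P_{ii})^{-1/2}. Let Σ be an invertible p×p real matrix such that P := Σ⁻¹ has strictly positive diagonal entries, let P_d be the diagonal matrix with entries P_{ii}, and let Ω = g(Σ) = d(P)·P·d(P). Then g is Fréchet differentiable at Σ with derivative H ↦ −d(P) · (P H P) · d(P) + (1/2)(dg(P H P) · P_d⁻¹ · Ω + Ω · P_d⁻¹ · dg(P H P)), where dg(M) denotes the diagonal matrix with entries M_{ii}. -/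

import Mathlib

open Matrix

attribute [local instance] Matrix.normedAddCommGroup Matrix.normedSpace

/-- `d(P)`: the diagonal matrix with entries `(P_{ii})^{-1/2}`. -/
noncomputable def dmat {p : ℕ} (P : Matrix (Fin p) (Fin p) ℝ) : Matrix (Fin p) (Fin p) ℝ :=
  Matrix.diagonal fun i => (Real.sqrt (P i i))⁻¹

/-- The normalized-inverse map `g(S) = d(S⁻¹) · S⁻¹ · d(S⁻¹)`. -/
noncomputable def normalizedInv {p : ℕ} (S : Matrix (Fin p) (Fin p) ℝ) :
    Matrix (Fin p) (Fin p) ℝ :=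
  dmat S⁻¹ * S⁻¹ * dmat S⁻¹

namespace NIAux

open Asymptotics Filter Topology

variable {p : ℕ}

local notation "M" => Matrix (Fin p) (Fin p) ℝ

/-- The topology on matrices induced by the (local) entrywise sup norm. -/
abbrev topM (p : ℕ) : TopologicalSpace (Matrix (Fin p) (Fin p) ℝ) :=
  PseudoMetricSpace.toUniformSpace.toTopologicalSpace

attribute [local instance] topM

theorem norm_mul_le' (A B : M) : ‖A * B‖ ≤ (p : ℝ) * ‖A‖ * ‖B‖ := by
  rw [Matrix.norm_le_iff (by positivity)]
  intro i j
  rw [Matrix.mul_apply]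
  calc ‖∑ k, A i k * B k j‖ ≤ ∑ k, ‖A i k * B k j‖ := norm_sum_le _ _
    _ ≤ ∑ _k : Fin p, ‖A‖ * ‖B‖ := by
        refine Finset.sum_le_sum fun k _ => ?_
        rw [norm_mul]
        exact mul_le_mul (Matrix.norm_entry_le_entrywise_sup_norm A)
          (Matrix.norm_entry_le_entrywise_sup_norm B) (norm_nonneg _) (norm_nonneg _)
    _ = (p : ℝ) * ‖A‖ * ‖B‖ := by simp [Finset.sum_const, mul_assoc]

/-- Matrix multiplication as a continuous bilinear map. -/
noncomputable def mulCLM : M →L[ℝ] M →L[ℝ] M :=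
  LinearMap.mkContinuous₂ (LinearMap.mul ℝ M) p norm_mul_le'

@[simp] theorem mulCLM_apply (A B : M) : mulCLM A B = A * B := rfl

/-- Entry evaluation as a continuous linear map. -/
noncomputable def entryCLM (i j : Fin p) : M →L[ℝ] ℝ :=
  LinearMap.mkContinuous
    { toFun := fun A : M => A i j, map_add' := fun _ _ => rfl, map_smul' := fun _ _ => rfl }
    1 (fun A => by rw [one_mul]; exact Matrix.norm_entry_le_entrywise_sup_norm A)

@[simp] theorem entryCLM_apply (i j : Fin p) (A : M) : entryCLM i j A = A i j := rfl

/-- `Matrix.diagonal` as a continuous linear map. -/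
noncomputable def diagCLM : (Fin p → ℝ) →L[ℝ] M :=
  LinearMap.mkContinuous (Matrix.diagonalLinearMap (Fin p) ℝ ℝ) 1 (fun v => by
    rw [Matrix.norm_le_iff (by positivity), one_mul]
    intro i j
    rcases eq_or_ne i j with rfl | h
    · simpa using norm_le_pi_norm v i
    · simp [Matrix.diagonal_apply_ne _ h])

@[simp] theorem diagCLM_apply (v : Fin p → ℝ) : diagCLM v = Matrix.diagonal v := rfl

/-- Fréchet derivative of matrix inversion at an invertible matrix. -/
theorem hasFDerivAt_inv (A : M) (h : IsUnit A.det) :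
    HasFDerivAt (fun S : M => S⁻¹) (-((mulCLM.flip A⁻¹).comp (mulCLM A⁻¹))) A := by
  erw [hasFDerivAt_iff_isLittleO_nhds_zero]
  have hcont : Tendsto (fun H : M => (A + H)⁻¹) (𝓝 0) (𝓝 A⁻¹) := by
    have h1 : ContinuousAt Inv.inv A := by
      apply continuousAt_matrix_inv
      rw [Ring.inverse_eq_inv']
      exact continuousAt_inv₀ (IsUnit.ne_zero h)
    have h2 : Tendsto (fun H : M => A + H) (𝓝 0) (𝓝 A) := by
      exact ((continuous_const (y := A)).add continuous_id).tendsto' (0 : M) A (add_zero A)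
    exact h1.tendsto.comp h2
  have hunit : ∀ᶠ H : M in 𝓝 0, IsUnit (A + H).det := by
    have hdet : Tendsto (fun H : M => (A + H).det) (𝓝 0) (𝓝 A.det) := by
      have : Continuous fun H : M => (A + H).det :=
        (continuous_const.add continuous_id).matrix_det
      simpa using this.tendsto (0 : M)
    exact (hdet.eventually_ne (IsUnit.ne_zero h)).mono fun H hH => isUnit_iff_ne_zero.mpr hH
  have key : ∀ᶠ H : M in 𝓝 0,
      (A + H)⁻¹ - A⁻¹ - (-((mulCLM.flip A⁻¹).comp (mulCLM A⁻¹))) H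
        = (A⁻¹ - (A + H)⁻¹) * H * A⁻¹ := by
    filter_upwards [hunit] with H hH
    have h1 : (A + H)⁻¹ * (A + H) = 1 := Matrix.nonsing_inv_mul _ hH
    have h2 : A * A⁻¹ = 1 := Matrix.mul_nonsing_inv _ h
    have h3 : (A + H)⁻¹ - A⁻¹ = -((A + H)⁻¹ * H * A⁻¹) := by
      have : (A + H)⁻¹ * ((1 : M) - (A + H) * A⁻¹) = (A + H)⁻¹ - A⁻¹ := by
        rw [mul_sub, mul_one, ← mul_assoc, h1, one_mul]
      rw [← this, add_mul, h2]
      noncomm_ring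
    show (A + H)⁻¹ - A⁻¹ - -(A⁻¹ * H * A⁻¹) = (A⁻¹ - (A + H)⁻¹) * H * A⁻¹
    rw [h3]
    noncomm_ring
  rw [isLittleO_iff]
  intro c hc
  have hC : (0:ℝ) < (p:ℝ)^2 * ‖(A⁻¹ : M)‖ + 1 := by positivity
  have hball : ∀ᶠ H : M in 𝓝 0, ‖A⁻¹ - (A + H)⁻¹‖ ≤ c / ((p:ℝ)^2 * ‖(A⁻¹ : M)‖ + 1) := by
    have : Tendsto (fun H : M => A⁻¹ - (A + H)⁻¹) (𝓝 0) (𝓝 0) := by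
      have := (tendsto_const_nhds (x := A⁻¹) (f := 𝓝 (0:M))).sub hcont
      simpa using this
    have := this.norm
    simp only [norm_zero] at this
    exact this.eventually_le_const (by positivity)
  filter_upwards [key, hball] with H hkey hb
  refine (congrArg norm hkey).le.trans ?_
  have hb1 : ‖(A⁻¹ - (A + H)⁻¹) * H * A⁻¹‖
      ≤ (p:ℝ) * ((p:ℝ) * ‖A⁻¹ - (A + H)⁻¹‖ * ‖H‖) * ‖(A⁻¹ : M)‖ := by
    calc ‖(A⁻¹ - (A + H)⁻¹) * H * A⁻¹‖
        ≤ (p:ℝ) * ‖(A⁻¹ - (A + H)⁻¹) * H‖ * ‖(A⁻¹ : M)‖ := norm_mul_le' _ _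
      _ ≤ (p:ℝ) * ((p:ℝ) * ‖A⁻¹ - (A + H)⁻¹‖ * ‖H‖) * ‖(A⁻¹ : M)‖ := by
          gcongr
          exact norm_mul_le' _ _
  refine hb1.trans ?_
  have heq : (p:ℝ) * ((p:ℝ) * ‖A⁻¹ - (A + H)⁻¹‖ * ‖H‖) * ‖(A⁻¹ : M)‖
      = ((p:ℝ)^2 * ‖(A⁻¹ : M)‖) * ‖A⁻¹ - (A + H)⁻¹‖ * ‖H‖ := by ring
  rw [heq]
  have h4 : ((p:ℝ)^2 * ‖(A⁻¹ : M)‖) * ‖A⁻¹ - (A + H)⁻¹‖ ≤ c := by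
    calc ((p:ℝ)^2 * ‖(A⁻¹ : M)‖) * ‖A⁻¹ - (A + H)⁻¹‖
        ≤ ((p:ℝ)^2 * ‖(A⁻¹ : M)‖ + 1) * (c / ((p:ℝ)^2 * ‖(A⁻¹ : M)‖ + 1)) := by
          apply mul_le_mul (by linarith) hb (norm_nonneg _) (le_of_lt hC)
      _ = c := by field_simp
  exact mul_le_mul_of_nonneg_right h4 (norm_nonneg _)

end NIAux

/-- The map sending a covariance matrix to its normalized inverse is Fréchet
differentiable at an invertible `Σ` (with `P = Σ⁻¹` having positive diagonal), with derivative
`H ↦ −d(P)·(PHP)·d(P) + (1/2)(dg(PHP)·P_d⁻¹·Ω + Ω·P_d⁻¹·dg(PHP))`. -/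
theorem hasFDerivAt_normalizedInv
    {p : ℕ} (hp : 1 ≤ p) (Sigma : Matrix (Fin p) (Fin p) ℝ)
    (hinv : IsUnit Sigma.det)
    (P : Matrix (Fin p) (Fin p) ℝ) (hP : P = Sigma⁻¹)
    (hpos : ∀ i, 0 < P i i)
    (Pd : Matrix (Fin p) (Fin p) ℝ) (hPd : Pd = Matrix.diagonal fun i => P i i)
    (Ω : Matrix (Fin p) (Fin p) ℝ) (hΩ : Ω = dmat P * P * dmat P) :
    ∃ L : Matrix (Fin p) (Fin p) ℝ →L[ℝ] Matrix (Fin p) (Fin p) ℝ,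
      (∀ H : Matrix (Fin p) (Fin p) ℝ,
        L H = -(dmat P * (P * H * P) * dmat P)
          + (1 / 2 : ℝ) • ((Matrix.diagonal fun i => (P * H * P) i i) * Pd⁻¹ * Ω
              + Ω * Pd⁻¹ * (Matrix.diagonal fun i => (P * H * P) i i)))
      ∧ HasFDerivAt normalizedInv L Sigma := by
  subst hP hPd hΩ
  set P : Matrix (Fin p) (Fin p) ℝ := Sigma⁻¹ with hP
  set L₁ : Matrix (Fin p) (Fin p) ℝ →L[ℝ] Matrix (Fin p) (Fin p) ℝ :=
    -((NIAux.mulCLM.flip P).comp (NIAux.mulCLM P)) with hL₁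
  have hInv : HasFDerivAt (fun S : Matrix (Fin p) (Fin p) ℝ => S⁻¹) L₁ Sigma :=
    NIAux.hasFDerivAt_inv Sigma hinv
  set c : Fin p → ℝ := fun i => -(1 / (2 * Real.sqrt (P i i))) / (Real.sqrt (P i i)) ^ 2 with hc
  set φ' : Fin p → (Matrix (Fin p) (Fin p) ℝ →L[ℝ] ℝ) :=
    fun i => c i • ((NIAux.entryCLM i i).comp L₁) with hφ'
  have hφ : ∀ i, HasFDerivAt (fun S : Matrix (Fin p) (Fin p) ℝ =>
      (Real.sqrt (S⁻¹ i i))⁻¹) (φ' i) Sigma := by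
    intro i
    have ha : (0:ℝ) < P i i := hpos i
    have hs : HasDerivAt (fun x => (Real.sqrt x)⁻¹) (c i) (P i i) :=
      (Real.hasDerivAt_sqrt (ne_of_gt ha)).inv (by positivity)
    have he : HasFDerivAt (fun S : Matrix (Fin p) (Fin p) ℝ => S⁻¹ i i)
        ((NIAux.entryCLM i i).comp L₁) Sigma :=
      (NIAux.entryCLM i i).hasFDerivAt.comp Sigma hInv
    exact hs.comp_hasFDerivAt (h₂ := fun x => (Real.sqrt x)⁻¹) Sigma he
  have hh : HasFDerivAt (fun (S : Matrix (Fin p) (Fin p) ℝ) (i : Fin p) =>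
      (Real.sqrt (S⁻¹ i i))⁻¹) (ContinuousLinearMap.pi φ') Sigma := hasFDerivAt_pi.2 hφ
  set LD : Matrix (Fin p) (Fin p) ℝ →L[ℝ] Matrix (Fin p) (Fin p) ℝ :=
    NIAux.diagCLM.comp (ContinuousLinearMap.pi φ') with hLD
  have hD : HasFDerivAt (fun S : Matrix (Fin p) (Fin p) ℝ => dmat S⁻¹) LD Sigma :=
    NIAux.diagCLM.hasFDerivAt.comp Sigma hh
  have hc1 : HasFDerivAt (fun S : Matrix (Fin p) (Fin p) ℝ => NIAux.mulCLM (dmat S⁻¹))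
      (NIAux.mulCLM.comp LD) Sigma := NIAux.mulCLM.hasFDerivAt.comp Sigma hD
  have step1 := hc1.clm_apply hInv
  have hc2 := NIAux.mulCLM.hasFDerivAt.comp Sigma step1
  have step2 := hc2.clm_apply hD
  refine ⟨_, ?_, step2⟩
  -- now prove the formula
  intro H
  have hai : ∀ i, (0:ℝ) < P i i := hpos
  have hs2 : ∀ i, Real.sqrt (P i i) * Real.sqrt (P i i) = P i i :=
    fun i => Real.mul_self_sqrt (le_of_lt (hai i))
  have hsne : ∀ i, Real.sqrt (P i i) ≠ 0 := fun i => ne_of_gt (Real.sqrt_pos.2 (hai i))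
  have hane : ∀ i, P i i ≠ 0 := fun i => ne_of_gt (hai i)
  have hPdinv : (Matrix.diagonal fun i => P i i)⁻¹
      = Matrix.diagonal fun i => (P i i)⁻¹ := by
    apply Matrix.inv_eq_right_inv
    rw [Matrix.diagonal_mul_diagonal,
      show (fun i => P i i * (P i i)⁻¹) = fun _ => (1:ℝ) from
        funext fun i => mul_inv_cancel₀ (hane i), Matrix.diagonal_one]
  rw [hPdinv]
  ext i j
  change ((dmat P * P) * Matrix.diagonal (fun k => c k * (-(P * H * P)) k k)
    + (dmat P * -(P * H * P) + Matrix.diagonal (fun k => c k * (-(P * H * P)) k k) * P) * dmat P) i j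
    = _
  simp only [ContinuousLinearMap.add_apply, ContinuousLinearMap.comp_apply,
    ContinuousLinearMap.flip_apply, ContinuousLinearMap.neg_apply,
    ContinuousLinearMap.smul_apply, NIAux.mulCLM_apply, NIAux.diagCLM_apply,
    NIAux.entryCLM_apply, ContinuousLinearMap.pi_apply, dmat, Matrix.add_apply,
    Function.comp_apply, hLD, hφ', hL₁, ← hP,
    Matrix.neg_apply, Matrix.smul_apply, Matrix.diagonal_mul, Matrix.mul_diagonal,
    Matrix.diagonal_mul_diagonal, Matrix.diagonal_apply_eq, smul_eq_mul]
  simp only [hc]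
  have hii := hs2 i
  have hjj := hs2 j
  have hsi0 := hsne i
  have hsj0 := hsne j
  set si := Real.sqrt (P i i) with hsidef
  set sj := Real.sqrt (P j j) with hsjdef
  rw [← hii, ← hjj]
  field_simp
  ring
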